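/- arXiv:2011.01824 — 5 statements merged into one kernel-verified Lean document; each statement's English description precedes it below -/
import Mathlib

section
/- Refinement of Dedekind's theorem: let T be a finite abelian group, K a field of characteristic zero, and S ⊆ T a subset with |T \ S| / |T| < 2^{-k+1} (i.e. 2^{k-1} · |T \ S| < |T|). Then any k distinct characters θ₁,…,θ_k : T → Kˣ are linearly independent when viewed as functions S → K. -/
open Finset

private theorem refined_dedekind_aux
    {T K : Type*} [CommGroup T] [Fintype T] [DecidableEq T]
    [Field K] [CharZero K] (k : ℕ) :
    ∀ (S : Finset T), 2 ^ (k - 1) * (Sᶜ).card < Fintype.card T →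
    ∀ (θ : Fin k → (T →* Kˣ)), Function.Injective θ →
    ∀ (c : Fin k → K), (∀ s ∈ S, ∑ i, c i * ((θ i s : Kˣ) : K) = 0) →
    ∀ i, c i = 0 := by
  induction k with
  | zero => intro S hS θ hθ c hv i; exact i.elim0
  | succ k ih =>
    intro S hS θ hθ c hv
    have hSk : 2 ^ k * (Sᶜ).card < Fintype.card T := by simpa using hS
    have hmain : ∀ i : Fin k, c i.castSucc = 0 := by
      intro i
      have hne : θ i.castSucc ≠ θ (Fin.last k) := by
        intro h
        exact absurd (hθ h) (Fin.ne_last_of_lt (Fin.castSucc_lt_last i))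
      obtain ⟨t, ht⟩ : ∃ t, θ i.castSucc t ≠ θ (Fin.last k) t := by
        by_contra h
        push_neg at h
        exact hne (MonoidHom.ext h)
      set A := S.filter (fun s => t * s ∈ S) with hA
      have hsub : Aᶜ ⊆ Sᶜ ∪ (Sᶜ).image (fun x => t⁻¹ * x) := by
        intro s hs
        rw [Finset.mem_compl, hA, Finset.mem_filter, not_and_or] at hs
        rcases hs with hs | hs
        · exact Finset.mem_union_left _ (Finset.mem_compl.mpr hs)
        · refine Finset.mem_union_right _ (Finset.mem_image.mpr ⟨t * s, Finset.mem_compl.mpr hs, ?_⟩)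
          group
      have hcard : (Aᶜ).card ≤ 2 * (Sᶜ).card := by
        calc (Aᶜ).card ≤ (Sᶜ ∪ (Sᶜ).image (fun x => t⁻¹ * x)).card :=
              Finset.card_le_card hsub
          _ ≤ (Sᶜ).card + ((Sᶜ).image (fun x => t⁻¹ * x)).card := Finset.card_union_le _ _
          _ ≤ (Sᶜ).card + (Sᶜ).card := by
              exact Nat.add_le_add_left (Finset.card_image_le) _
          _ = 2 * (Sᶜ).card := by ring
      have hS' : 2 ^ (k - 1) * (Aᶜ).card < Fintype.card T := by
        calc 2 ^ (k - 1) * (Aᶜ).card ≤ 2 ^ (k - 1) * (2 * (Sᶜ).card) :=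
              Nat.mul_le_mul_left _ hcard
          _ = 2 ^ (k - 1 + 1) * (Sᶜ).card := by ring
          _ = 2 ^ k * (Sᶜ).card := by rw [Nat.sub_add_cancel i.pos]
          _ < Fintype.card T := hSk
      have hv' : ∀ s ∈ A, ∑ j : Fin k,
          (c j.castSucc * (((θ j.castSucc t : Kˣ) : K) - ((θ (Fin.last k) t : Kˣ) : K))) *
            ((θ j.castSucc s : Kˣ) : K) = 0 := by
        intro s hs
        rw [hA, Finset.mem_filter] at hs
        obtain ⟨hs1, hs2⟩ := hs
        have e2 := hv s hs1
        have e1 : ∑ j : Fin (k+1), c j * (((θ j t : Kˣ) : K) * ((θ j s : Kˣ) : K)) = 0 := by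
          have := hv (t * s) hs2
          simpa [map_mul, Units.val_mul, mul_assoc] using this
        have big : ∑ j : Fin (k+1),
            (c j * (((θ j t : Kˣ) : K) - ((θ (Fin.last k) t : Kˣ) : K))) *
              ((θ j s : Kˣ) : K) = 0 := by
          have expand : ∑ j : Fin (k+1),
              (c j * (((θ j t : Kˣ) : K) - ((θ (Fin.last k) t : Kˣ) : K))) *
                ((θ j s : Kˣ) : K)
              = (∑ j : Fin (k+1), c j * (((θ j t : Kˣ) : K) * ((θ j s : Kˣ) : K)))
                - ((θ (Fin.last k) t : Kˣ) : K) * ∑ j : Fin (k+1), c j * ((θ j s : Kˣ) : K) := by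
            rw [Finset.mul_sum, ← Finset.sum_sub_distrib]
            exact Finset.sum_congr rfl fun j _ => by ring
          rw [expand, e1, e2, mul_zero, sub_zero]
        rw [Fin.sum_univ_castSucc] at big
        simpa using big
      have hd := ih A hS' (fun j => θ j.castSucc)
        (hθ.comp (Fin.castSucc_injective k))
        (fun j => c j.castSucc * (((θ j.castSucc t : Kˣ) : K) - ((θ (Fin.last k) t : Kˣ) : K)))
        hv' i
      have hne0 : ((θ i.castSucc t : Kˣ) : K) - ((θ (Fin.last k) t : Kˣ) : K) ≠ 0 :=
        sub_ne_zero.mpr (fun h => ht (Units.ext h))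
      exact (mul_eq_zero.mp hd).resolve_right hne0
    intro i
    induction i using Fin.lastCases with
    | cast j => exact hmain j
    | last =>
      have hScard : S.Nonempty := by
        rw [Finset.nonempty_iff_ne_empty]
        intro h
        rw [h] at hSk
        simp only [Finset.compl_empty, Finset.card_univ] at hSk
        nlinarith [Nat.one_le_two_pow (n := k)]
      obtain ⟨s, hs⟩ := hScard
      have := hv s hs
      rw [Fin.sum_univ_castSucc] at this
      have hz : ∀ j : Fin k, c j.castSucc * ((θ j.castSucc s : Kˣ) : K) = 0 := fun j => by
        rw [hmain j, zero_mul]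
      rw [Finset.sum_congr rfl (fun j _ => hz j)] at this
      simp only [Finset.sum_const_zero, zero_add] at this
      exact (mul_eq_zero.mp this).resolve_right (Units.ne_zero _)

/-- Refinement of Dedekind's theorem: if `S ⊆ T` satisfies
`2^(k-1) * |T \ S| < |T|`, then any `k` distinct characters of `T` are
linearly independent as functions on `S`. -/
theorem refined_dedekind_linearIndependent_on_subset
    {T K : Type*} [CommGroup T] [Fintype T] [DecidableEq T]
    [Field K] [CharZero K]
    (k : ℕ) (S : Finset T)
    (hS : 2 ^ (k - 1) * (Sᶜ).card < Fintype.card T)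
    (θ : Fin k → (T →* Kˣ)) (hθ : Function.Injective θ)
    (c : Fin k → K)
    (hvanish : ∀ s ∈ S, ∑ i, c i * ((θ i s : Kˣ) : K) = 0) :
    ∀ i, c i = 0 :=
  refined_dedekind_aux k S hS θ hθ c hvanish
end

section
/- Let T be a finite abelian group, K a field of characteristic zero, and S ⊆ T with 2^{m+m'-1}·|T \ S| < |T|. Suppose θ₁,…,θ_m and θ'₁,…,θ'_{m'} are characters T → Kˣ such that the combined list of m+m' characters consists of pairwise distinct characters, and c₁,…,c_m, c'₁,…,c'_{m'} are nonzero elements of K with c₁θ₁(s)+⋯+c_mθ_m(s) = c'₁θ'₁(s)+⋯+c'_{m'}θ'_{m'}(s) for all s ∈ S. Then m = 0 and m' = 0. -/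
open Finset

lemma aux_char_indep {T K : Type*} [CommGroup T] [Fintype T] [DecidableEq T]
    [Field K] [CharZero K] :
    ∀ (n : ℕ) (S : Finset T), 2 ^ n * (Sᶜ).card < 2 * Fintype.card T →
    ∀ (f : Fin n → (T →* Kˣ)), Function.Injective f →
    ∀ (a : Fin n → K), (∀ s ∈ S, ∑ i, a i * ((f i s : Kˣ) : K) = 0) →
    ∀ i, a i = 0 := by
  intro n
  induction n with
  | zero => intro _ _ _ _ _ _ i; exact absurd i.2 (Nat.not_lt_zero _)
  | succ k ih =>
    intro S hS f hf a hsum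
    have hScard : (Sᶜ).card < Fintype.card T := by
      have h2 : 2 * (Sᶜ).card ≤ 2 ^ (k+1) * (Sᶜ).card :=
        Nat.mul_le_mul_right _ (by
          calc 2 = 2 ^ 1 := (pow_one 2).symm
          _ ≤ 2 ^ (k+1) := Nat.pow_le_pow_right (by norm_num) (Nat.le_add_left 1 k))
      omega
    have hSne : S.Nonempty := by
      rw [← Finset.card_pos]
      have := Finset.card_compl S (α := T)
      omega
    -- step 1: tail coefficients vanish
    have key : ∀ t : T, ∀ i : Fin k,
        a i.succ * (((f i.succ t : Kˣ) : K) - ((f 0 t : Kˣ) : K)) = 0 := by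
      intro t
      set S' : Finset T := S ∩ S.image (· * t⁻¹) with hS'def
      have hmem : ∀ s ∈ S', s ∈ S ∧ s * t ∈ S := by
        intro s hs
        rw [hS'def, Finset.mem_inter, Finset.mem_image] at hs
        obtain ⟨h1, x, hx, rfl⟩ := hs
        exact ⟨h1, by simpa using hx⟩
      have hcard : (S'ᶜ).card ≤ 2 * (Sᶜ).card := by
        have h1 : S'ᶜ = Sᶜ ∪ (S.image (· * t⁻¹))ᶜ := by
          rw [hS'def, Finset.compl_inter]
        have h2 : (S.image (· * t⁻¹)).card = S.card :=
          Finset.card_image_of_injective _ (mul_left_injective _)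
        have h3 := Finset.card_union_le (Sᶜ) ((S.image (· * t⁻¹))ᶜ)
        rw [← h1] at h3
        have h4 := Finset.card_compl S (α := T)
        have h5 := Finset.card_compl (S.image (· * t⁻¹)) (α := T)
        omega
      have hS'bound : 2 ^ k * (S'ᶜ).card < 2 * Fintype.card T := by
        calc 2 ^ k * (S'ᶜ).card ≤ 2 ^ k * (2 * (Sᶜ).card) :=
              Nat.mul_le_mul_left _ hcard
          _ = 2 ^ (k+1) * (Sᶜ).card := by ring
          _ < 2 * Fintype.card T := hS
      have hsum' : ∀ s ∈ S',
          ∑ i : Fin k, (a i.succ * (((f i.succ t : Kˣ) : K) - ((f 0 t : Kˣ) : K)))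
            * ((f i.succ s : Kˣ) : K) = 0 := by
        intro s hs
        obtain ⟨hs1, hs2⟩ := hmem s hs
        have e1 := hsum _ hs2
        have e2 := hsum _ hs1
        have e3 : ∑ i, a i * ((f i (s * t) : Kˣ) : K)
            - ((f 0 t : Kˣ) : K) * ∑ i, a i * ((f i s : Kˣ) : K) = 0 := by
          rw [e1, e2]; ring
        rw [Finset.mul_sum, ← Finset.sum_sub_distrib] at e3
        have e4 : ∀ i : Fin (k+1), a i * ((f i (s * t) : Kˣ) : K)
            - ((f 0 t : Kˣ) : K) * (a i * ((f i s : Kˣ) : K))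
            = (a i * (((f i t : Kˣ) : K) - ((f 0 t : Kˣ) : K))) * ((f i s : Kˣ) : K) := by
          intro i
          have : ((f i (s * t) : Kˣ) : K) = ((f i s : Kˣ) : K) * ((f i t : Kˣ) : K) := by
            rw [map_mul]; push_cast; ring
          rw [this]; ring
        rw [Finset.sum_congr rfl (fun i _ => e4 i)] at e3
        rw [Fin.sum_univ_succ] at e3
        simpa using e3
      exact ih S' hS'bound (fun i => f i.succ)
        (fun i j h => Fin.succ_injective _ (hf h))
        _ hsum'
    have tail_zero : ∀ i : Fin k, a i.succ = 0 := by
      intro i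
      have hne : f i.succ ≠ f 0 := fun h => (Fin.succ_ne_zero i) (hf h)
      have : ∃ t, f i.succ t ≠ f 0 t := by
        by_contra h
        push_neg at h
        exact hne (MonoidHom.ext h)
      obtain ⟨t, ht⟩ := this
      have h2 := key t i
      have h3 : ((f i.succ t : Kˣ) : K) - ((f 0 t : Kˣ) : K) ≠ 0 := by
        intro h
        apply ht
        exact Units.ext (sub_eq_zero.mp h)
      exact (mul_eq_zero.mp h2).resolve_right h3
    have head_zero : a 0 = 0 := by
      obtain ⟨s, hs⟩ := hSne
      have e := hsum s hs
      rw [Fin.sum_univ_succ] at e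
      have : ∑ i : Fin k, a i.succ * ((f i.succ s : Kˣ) : K) = 0 :=
        Finset.sum_eq_zero (fun i _ => by rw [tail_zero i, zero_mul])
      rw [this, add_zero] at e
      exact (mul_eq_zero.mp e).resolve_right (Units.ne_zero _)
    intro i
    refine Fin.cases head_zero tail_zero i

/-- If `2^(m+m'-1) * |T \ S| < |T|` and two linear combinations of
pairwise distinct characters with nonzero coefficients agree on `S`,
then both combinations are empty. -/
theorem distinct_character_combinations_agree_on_subset_empty
    {T K : Type*} [CommGroup T] [Fintype T] [DecidableEq T]
    [Field K] [CharZero K]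
    (m m' : ℕ) (S : Finset T)
    (hS : 2 ^ (m + m' - 1) * (Sᶜ).card < Fintype.card T)
    (θ : Fin m → (T →* Kˣ)) (θ' : Fin m' → (T →* Kˣ))
    (hdist : Function.Injective (Sum.elim θ θ' : Fin m ⊕ Fin m' → (T →* Kˣ)))
    (c : Fin m → K) (c' : Fin m' → K)
    (hc : ∀ i, c i ≠ 0) (hc' : ∀ j, c' j ≠ 0)
    (heq : ∀ s ∈ S,
      ∑ i, c i * ((θ i s : Kˣ) : K) = ∑ j, c' j * ((θ' j s : Kˣ) : K)) :
    m = 0 ∧ m' = 0 := by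
  have hbound : 2 ^ (m + m') * (Sᶜ).card < 2 * Fintype.card T := by
    rcases Nat.eq_zero_or_pos (m + m') with h | h
    · have h4 := Finset.card_compl S (α := T)
      rw [h]
      simp only [pow_zero, one_mul]
      omega
    · have h2 : 2 ^ (m + m') = 2 * 2 ^ (m + m' - 1) := by
        rw [← pow_succ']
        congr 1
        omega
      rw [h2, mul_assoc]
      exact (mul_lt_mul_iff_right₀ (by norm_num : (0:ℕ) < 2)).mpr hS
  set e := finSumFinEquiv (m := m) (n := m') with hedef
  set f : Fin (m + m') → (T →* Kˣ) := fun i => Sum.elim θ θ' (e.symm i) with hfdef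
  set a : Fin (m + m') → K := fun i => Sum.elim c (fun j => -c' j) (e.symm i) with hadef
  have hfinj : Function.Injective f := hdist.comp e.symm.injective
  have hzero : ∀ s ∈ S, ∑ i, a i * ((f i s : Kˣ) : K) = 0 := by
    intro s hs
    rw [← Equiv.sum_comp e (fun i => a i * ((f i s : Kˣ) : K)), Fintype.sum_sum_type]
    simp only [hadef, hfdef, Equiv.symm_apply_apply, Sum.elim_inl, Sum.elim_inr]
    rw [heq s hs, ← Finset.sum_add_distrib]
    simp [neg_mul]
  have hall := aux_char_indep (m + m') S hbound f hfinj a hzero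
  constructor
  · by_contra h
    have hm : 0 < m := Nat.pos_of_ne_zero h
    have := hall (e (Sum.inl ⟨0, hm⟩))
    rw [hadef] at this
    simp at this
    exact hc _ this
  · by_contra h
    have hm : 0 < m' := Nat.pos_of_ne_zero h
    have := hall (e (Sum.inr ⟨0, hm⟩))
    rw [hadef] at this
    simp at this
    exact hc' _ this
end

section
/- Let T be a finite abelian group, K a field of characteristic zero, and S ⊆ T a subset with 2·|T \ S| < |T|. If a character θ : T → Kˣ is constant on S, then θ is the trivial character. -/
open Finset

/-- If `2 * |T \ S| < |T|` and a character of `T` is constant on `S`,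
then it is the trivial character. -/
theorem character_constant_on_large_subset_trivial
    {T K : Type*} [CommGroup T] [Fintype T] [DecidableEq T]
    [Field K] [CharZero K]
    (S : Finset T) (hS : 2 * (Sᶜ).card < Fintype.card T)
    (θ : T →* Kˣ)
    (hconst : ∀ s ∈ S, ∀ s' ∈ S, θ s = θ s') :
    θ = 1 := by
  have hScard : Fintype.card T < 2 * S.card := by
    have h1 : S.card + Sᶜ.card = Fintype.card T := by
      simpa using Finset.card_add_card_compl S
    omega
  ext t
  -- consider the translate t • S
  set A : Finset T := S.image (fun s => t * s) with hA
  have hAcard : A.card = S.card := Finset.card_image_of_injective _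
    (mul_right_injective t)
  have hinter : (A ∩ S).Nonempty := by
    rw [← Finset.card_pos]
    have h2 : (A ∪ S).card ≤ Fintype.card T := Finset.card_le_univ _
    have h3 : (A ∪ S).card + (A ∩ S).card = A.card + S.card :=
      Finset.card_union_add_card_inter A S
    omega
  obtain ⟨x, hx⟩ := hinter
  rw [Finset.mem_inter] at hx
  obtain ⟨hxA, hxS⟩ := hx
  rw [hA, Finset.mem_image] at hxA
  obtain ⟨s, hsS, hts⟩ := hxA
  have : θ (t * s) = θ s := by
    rw [hts]; exact hconst x hxS s hsS
  rw [map_mul] at this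
  have ht : θ t = 1 := by
    have h4 : θ t * θ s = 1 * θ s := by rw [this, one_mul]
    exact mul_right_cancel h4
  simpa using ht
end

section
/- Let T be a finite abelian group, K a field of characteristic zero, and S ⊆ T with 2^{2k-1}·|T \ S| < |T|. Suppose f : S → K is a function admitting an expression f(s) = c₁θ₁(s)+⋯+c_mθ_m(s) for all s ∈ S with m ≤ k, the θᵢ pairwise distinct characters of T, and cᵢ ∈ K nonzero. Then this expression is unique: any other such expression with at most k distinct characters and nonzero coefficients uses the same set of pairs (θᵢ, cᵢ). -/
open Finset


lemma vanish_aux {T K : Type*} [CommGroup T] [Fintype T] [DecidableEq T] [Field K] :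
    ∀ (n : ℕ) (A : Finset (T →* Kˣ)), A.card ≤ n →
    ∀ (S : Finset T), Sᶜ.card * 2 ^ n < 2 * Fintype.card T →
    ∀ (d : (T →* Kˣ) → K),
      (∀ s ∈ S, ∑ χ ∈ A, d χ * ((χ s : Kˣ) : K) = 0) →
      ∀ χ ∈ A, d χ = 0 := by
  classical
  intro n
  induction n with
  | zero =>
    intro A hA S hS d hsum χ hχ
    rw [Nat.le_zero, Finset.card_eq_zero] at hA
    simp [hA] at hχ
  | succ n IH =>
    intro A hA S hS d hsum χ₁ hχ₁
    have hSne : S.Nonempty := by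
      rw [← Finset.card_pos]
      have h2 : (1:ℕ) < 2 ^ (n+1) := Nat.one_lt_two_pow_iff.mpr (Nat.succ_ne_zero n)
      have h1 : Sᶜ.card < Fintype.card T := by nlinarith
      have hc := Finset.card_compl S
      omega
    by_cases hcard : A.card ≤ 1
    · have hAeq : A = {χ₁} :=
        Finset.eq_singleton_iff_unique_mem.mpr
          ⟨hχ₁, fun y hy => Finset.card_le_one.mp hcard y hy χ₁ hχ₁⟩
      obtain ⟨s, hs⟩ := hSne
      have h := hsum s hs
      rw [hAeq, Finset.sum_singleton] at h
      rcases mul_eq_zero.mp h with h | h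
      · exact h
      · exact absurd h (Units.ne_zero _)
    · push_neg at hcard
      obtain ⟨χ₂, hχ₂, hne⟩ := Finset.exists_mem_ne hcard χ₁
      obtain ⟨t, ht⟩ : ∃ t, χ₁ t ≠ χ₂ t := by
        by_contra h
        push_neg at h
        exact hne.symm (MonoidHom.ext h)
      set B : Finset T := S.image (· * t⁻¹) with hB
      have hmemB : ∀ x : T, x ∈ B ↔ x * t ∈ S := by
        intro x
        simp only [hB, Finset.mem_image]
        constructor
        · rintro ⟨s, hs, rfl⟩; simpa using hs
        · intro hx; exact ⟨x * t, hx, by group⟩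
      set S' : Finset T := S ∩ B with hS'
      set e : (T →* Kˣ) → K :=
        fun χ => d χ * (((χ t : Kˣ) : K) * ((((χ₂ t)⁻¹ : Kˣ) : K)) - 1) with he
      have key : ∀ s ∈ S', ∑ χ ∈ A.erase χ₂, e χ * ((χ s : Kˣ) : K) = 0 := by
        intro s hs
        have hs1 : s ∈ S := Finset.mem_of_mem_inter_left hs
        have hs2 : s * t ∈ S := (hmemB s).mp (Finset.mem_of_mem_inter_right hs)
        have h1 := hsum s hs1
        have h2 := hsum (s * t) hs2
        have he2 : e χ₂ * ((χ₂ s : Kˣ) : K) = 0 := by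
          have : ((χ₂ t : Kˣ) : K) * ((((χ₂ t)⁻¹ : Kˣ) : K)) = 1 := by
            rw [← Units.val_mul, mul_inv_cancel, Units.val_one]
          simp [he, this]
        rw [Finset.sum_erase_eq_sub hχ₂, he2, sub_zero]
        have heq : ∑ χ ∈ A, e χ * ((χ s : Kˣ) : K)
            = (((χ₂ t)⁻¹ : Kˣ) : K) * ∑ χ ∈ A, d χ * ((χ (s * t) : Kˣ) : K)
              - ∑ χ ∈ A, d χ * ((χ s : Kˣ) : K) := by
          rw [Finset.mul_sum, ← Finset.sum_sub_distrib]
          apply Finset.sum_congr rfl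
          intro χ _
          simp only [he, map_mul, Units.val_mul]
          ring
        rw [heq, h1, h2, mul_zero, sub_zero]
      have hcard' : (A.erase χ₂).card ≤ n := by
        have := Finset.card_erase_of_mem hχ₂
        omega
      have hBc : Bᶜ.card = Sᶜ.card := by
        have : B.card = S.card :=
          Finset.card_image_of_injective _ (fun a b h => by
            simpa using mul_right_cancel (a := a) (b := t⁻¹) h)
        rw [Finset.card_compl, Finset.card_compl, this]
      have hS'bound : S'ᶜ.card * 2 ^ n < 2 * Fintype.card T := by
        have h1 : S'ᶜ.card ≤ Sᶜ.card + Bᶜ.card := by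
          rw [hS', Finset.compl_inter]
          exact Finset.card_union_le _ _
        rw [hBc] at h1
        calc S'ᶜ.card * 2 ^ n ≤ (Sᶜ.card + Sᶜ.card) * 2 ^ n :=
              Nat.mul_le_mul_right _ h1
          _ = Sᶜ.card * 2 ^ (n + 1) := by ring
          _ < 2 * Fintype.card T := hS
      have he1 : e χ₁ = 0 :=
        IH (A.erase χ₂) hcard' S' hS'bound e key χ₁
          (Finset.mem_erase.mpr ⟨hne.symm, hχ₁⟩)
      rw [he] at he1
      rcases mul_eq_zero.mp he1 with h | h
      · exact h
      · exfalso
        apply ht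
        have : ((χ₁ t : Kˣ) : K) * ((((χ₂ t)⁻¹ : Kˣ) : K)) = 1 := sub_eq_zero.mp h
        rw [← Units.val_mul, ← Units.val_one (α := K)] at this
        have := Units.ext (α := K) this
        exact (mul_inv_eq_one.mp this)

/-- Uniqueness of an expression of a function on `S` as a linear combination of
at most `k` distinct characters with nonzero coefficients, when
`2^(2k-1) * |T \ S| < |T|`. -/
theorem character_expansion_on_subset_unique
    {T K : Type*} [CommGroup T] [Fintype T] [DecidableEq T]
    [Field K] [CharZero K]
    (k : ℕ) (S : Finset T)
    (hS : 2 ^ (2 * k - 1) * (Sᶜ).card < Fintype.card T)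
    (f : T → K)
    (m m' : ℕ) (hm : m ≤ k) (hm' : m' ≤ k)
    (θ : Fin m → (T →* Kˣ)) (hθ : Function.Injective θ)
    (θ' : Fin m' → (T →* Kˣ)) (hθ' : Function.Injective θ')
    (c : Fin m → K) (c' : Fin m' → K)
    (hc : ∀ i, c i ≠ 0) (hc' : ∀ j, c' j ≠ 0)
    (hf : ∀ s ∈ S, f s = ∑ i, c i * ((θ i s : Kˣ) : K))
    (hf' : ∀ s ∈ S, f s = ∑ j, c' j * ((θ' j s : Kˣ) : K)) :
    (Set.range fun i => (θ i, c i)) = Set.range fun j => (θ' j, c' j) := by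
  classical
  set A : Finset (T →* Kˣ) := (univ.image θ) ∪ (univ.image θ') with hA
  set d : (T →* Kˣ) → K := fun χ =>
    (∑ i ∈ univ.filter (fun i => θ i = χ), c i)
      - ∑ j ∈ univ.filter (fun j => θ' j = χ), c' j with hd
  -- grouping sums
  have hgroup : ∀ (s : T),
      ∑ χ ∈ A, (∑ i ∈ univ.filter (fun i => θ i = χ), c i) * ((χ s : Kˣ) : K)
        = ∑ i, c i * ((θ i s : Kˣ) : K) := by
    intro s
    rw [← Finset.sum_fiberwise_of_maps_to (g := θ)
          (fun i _ => Finset.mem_union_left _ (Finset.mem_image_of_mem θ (mem_univ i)))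
          (fun i => c i * ((θ i s : Kˣ) : K))]
    apply Finset.sum_congr rfl
    intro χ _
    rw [Finset.sum_mul]
    apply Finset.sum_congr rfl
    intro i hi
    rw [(Finset.mem_filter.mp hi).2]
  have hgroup' : ∀ (s : T),
      ∑ χ ∈ A, (∑ j ∈ univ.filter (fun j => θ' j = χ), c' j) * ((χ s : Kˣ) : K)
        = ∑ j, c' j * ((θ' j s : Kˣ) : K) := by
    intro s
    rw [← Finset.sum_fiberwise_of_maps_to (g := θ')
          (fun j _ => Finset.mem_union_right _ (Finset.mem_image_of_mem θ' (mem_univ j)))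
          (fun j => c' j * ((θ' j s : Kˣ) : K))]
    apply Finset.sum_congr rfl
    intro χ _
    rw [Finset.sum_mul]
    apply Finset.sum_congr rfl
    intro j hj
    rw [(Finset.mem_filter.mp hj).2]
  have hvanish : ∀ s ∈ S, ∑ χ ∈ A, d χ * ((χ s : Kˣ) : K) = 0 := by
    intro s hs
    have : ∑ χ ∈ A, d χ * ((χ s : Kˣ) : K)
        = (∑ i, c i * ((θ i s : Kˣ) : K)) - ∑ j, c' j * ((θ' j s : Kˣ) : K) := by
      rw [← hgroup s, ← hgroup' s, ← Finset.sum_sub_distrib]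
      apply Finset.sum_congr rfl
      intro χ _
      simp only [hd]
      ring
    rw [this, ← hf s hs, ← hf' s hs, sub_self]
  have hAcard : A.card ≤ m + m' := by
    calc A.card ≤ (univ.image θ).card + (univ.image θ').card := Finset.card_union_le _ _
      _ ≤ m + m' := Nat.add_le_add
            (le_trans Finset.card_image_le (by simp))
            (le_trans Finset.card_image_le (by simp))
  have hbound : Sᶜ.card * 2 ^ (m + m') < 2 * Fintype.card T := by
    have h1 : 2 ^ (m + m') ≤ 2 * 2 ^ (2 * k - 1) := by
      have : m + m' ≤ 2 * k := by omega
      calc (2:ℕ) ^ (m + m') ≤ 2 ^ (2 * k) := Nat.pow_le_pow_right (by norm_num) this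
        _ ≤ 2 * 2 ^ (2 * k - 1) := by
            rcases Nat.eq_zero_or_pos k with hk | hk
            · simp [hk]
            · rw [← pow_succ']
              apply Nat.pow_le_pow_right (by norm_num)
              omega
    calc Sᶜ.card * 2 ^ (m + m') ≤ Sᶜ.card * (2 * 2 ^ (2 * k - 1)) :=
          Nat.mul_le_mul_left _ h1
      _ = 2 * (2 ^ (2 * k - 1) * Sᶜ.card) := by ring
      _ < 2 * Fintype.card T := by omega
  have hzero : ∀ χ ∈ A, d χ = 0 :=
    vanish_aux (m + m') A hAcard S hbound d hvanish
  -- extract equality of ranges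
  have hfilθ : ∀ i : Fin m, univ.filter (fun i' => θ i' = θ i) = {i} := by
    intro i; ext i'; simp [hθ.eq_iff]
  have hfilθ' : ∀ j : Fin m', univ.filter (fun j' => θ' j' = θ' j) = {j} := by
    intro j; ext j'; simp [hθ'.eq_iff]
  apply Set.eq_of_subset_of_subset
  · rintro p ⟨i, rfl⟩
    have h := hzero (θ i) (Finset.mem_union_left _ (Finset.mem_image_of_mem θ (mem_univ i)))
    rw [hd] at h
    simp only [hfilθ i, Finset.sum_singleton] at h
    have hsum : (∑ j ∈ univ.filter (fun j => θ' j = θ i), c' j) = c i :=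
      (sub_eq_zero.mp h).symm
    have hne : (univ.filter (fun j => θ' j = θ i)).Nonempty := by
      by_contra hemp
      rw [Finset.not_nonempty_iff_eq_empty] at hemp
      rw [hemp, Finset.sum_empty] at hsum
      exact hc i hsum.symm
    obtain ⟨j, hj⟩ := hne
    have hθj : θ' j = θ i := (Finset.mem_filter.mp hj).2
    have hfil : univ.filter (fun j' => θ' j' = θ i) = {j} := by
      ext j'; simp [← hθj, hθ'.eq_iff]
    rw [hfil, Finset.sum_singleton] at hsum
    exact ⟨j, by simp [Prod.ext_iff, hθj, hsum]⟩
  · rintro p ⟨j, rfl⟩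
    have h := hzero (θ' j) (Finset.mem_union_right _ (Finset.mem_image_of_mem θ' (mem_univ j)))
    rw [hd] at h
    simp only [hfilθ' j, Finset.sum_singleton] at h
    have hsum : (∑ i ∈ univ.filter (fun i => θ i = θ' j), c i) = c' j :=
      sub_eq_zero.mp h
    have hne : (univ.filter (fun i => θ i = θ' j)).Nonempty := by
      by_contra hemp
      rw [Finset.not_nonempty_iff_eq_empty] at hemp
      rw [hemp, Finset.sum_empty] at hsum
      exact hc' j hsum.symm
    obtain ⟨i, hi⟩ := hne
    have hθi : θ i = θ' j := (Finset.mem_filter.mp hi).2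
    have hfil : univ.filter (fun i' => θ i' = θ' j) = {i} := by
      ext i'; simp [← hθi, hθ.eq_iff]
    rw [hfil, Finset.sum_singleton] at hsum
    exact ⟨i, by simp [Prod.ext_iff, hθi, hsum]⟩
end

section
/- Let T be a finite abelian group and K a field of characteristic zero. Any nonzero K-linear combination of finitely many distinct characters of T, viewed as a function T → K, is nonzero at some element of T; moreover if the combination involves k ≥ 1 characters with all coefficients nonzero, it is nonzero on at least 2^{1−k}·|T| elements of T. -/
open Finset
open scoped Classical

private lemma lusztig_aux {T K : Type*} [CommGroup T] [Fintype T] [DecidableEq T]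
    [Field K] :
    ∀ S : Finset (T →* Kˣ), S.Nonempty → ∀ c : (T →* Kˣ) → K, (∀ χ ∈ S, c χ ≠ 0) →
    Fintype.card T ≤ 2 ^ (S.card - 1) *
      (Finset.univ.filter fun t : T => ∑ χ ∈ S, c χ * ((χ t : Kˣ) : K) ≠ 0).card := by
  intro S
  induction S using Finset.strongInduction with
  | _ S ih =>
    intro hS c hc
    obtain ⟨χ₁, hχ₁⟩ := hS
    by_cases hcard : S.card = 1
    · obtain ⟨χ, rfl⟩ := Finset.card_eq_one.mp hcard
      have hne : ∀ t : T, c χ * ((χ t : Kˣ) : K) ≠ 0 := fun t =>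
        mul_ne_zero (hc χ (mem_singleton_self χ)) (Units.ne_zero (χ t))
      have : (Finset.univ.filter fun t : T => ∑ ψ ∈ ({χ} : Finset (T →* Kˣ)),
          c ψ * ((ψ t : Kˣ) : K) ≠ 0) = Finset.univ := by
        refine Finset.filter_true_of_mem fun t _ => by simpa using hne t
      rw [this]
      simp
    · have h2 : 2 ≤ S.card := by
        have := Finset.card_pos.mpr ⟨χ₁, hχ₁⟩; omega
      obtain ⟨χ₀, hχ₀⟩ : (S.erase χ₁).Nonempty := by
        rw [← Finset.card_pos, Finset.card_erase_of_mem hχ₁]; omega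
      have hne : χ₀ ≠ χ₁ := (Finset.mem_erase.mp hχ₀).1
      have hχ₀S : χ₀ ∈ S := (Finset.mem_erase.mp hχ₀).2
      obtain ⟨s, hs⟩ : ∃ s, χ₀ s ≠ χ₁ s := by
        by_contra h
        push_neg at h
        exact hne (MonoidHom.ext h)
      set d : (T →* Kˣ) → K :=
        fun χ => c χ * (((χ s : Kˣ) : K) * (((χ₁ s : Kˣ) : K))⁻¹ - 1) with hd
      set S' := (S.erase χ₁).filter (fun χ => (χ s : Kˣ) ≠ χ₁ s) with hS'def
      have hsub : S' ⊆ S := (Finset.filter_subset _ _).trans (Finset.erase_subset _ _)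
      have hχ₀S' : χ₀ ∈ S' := Finset.mem_filter.mpr ⟨hχ₀, hs⟩
      have hd0 : ∀ χ ∈ S', d χ ≠ 0 := by
        intro χ hχ
        have hχs : (χ s : Kˣ) ≠ χ₁ s := (Finset.mem_filter.mp hχ).2
        have hχS := (Finset.mem_erase.mp (Finset.mem_filter.mp hχ).1).2
        refine mul_ne_zero (hc χ hχS) ?_
        intro h
        apply hχs
        have h1 : ((χ s : Kˣ) : K) * (((χ₁ s : Kˣ) : K))⁻¹ = 1 := sub_eq_zero.mp h
        rw [mul_inv_eq_one₀ (Units.ne_zero _)] at h1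
        exact Units.ext h1
      have key : ∀ t : T, ∑ χ ∈ S', d χ * ((χ t : Kˣ) : K)
          = (∑ χ ∈ S, c χ * ((χ (t * s) : Kˣ) : K)) * (((χ₁ s : Kˣ) : K))⁻¹
            - ∑ χ ∈ S, c χ * ((χ t : Kˣ) : K) := by
        intro t
        have step1 : ∑ χ ∈ S', d χ * ((χ t : Kˣ) : K)
            = ∑ χ ∈ S, d χ * ((χ t : Kˣ) : K) := by
          refine Finset.sum_subset hsub ?_
          intro χ hχS hχS'
          have heq : (χ s : Kˣ) = χ₁ s := by
            by_cases hχe : χ = χ₁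
            · subst hχe; rfl
            · by_contra hne2
              exact hχS' (Finset.mem_filter.mpr ⟨Finset.mem_erase.mpr ⟨hχe, hχS⟩, hne2⟩)
          have : ((χ s : Kˣ) : K) * (((χ₁ s : Kˣ) : K))⁻¹ - 1 = 0 := by
            rw [heq, mul_inv_cancel₀ (Units.ne_zero _), sub_self]
          simp [hd, this]
        rw [step1, Finset.sum_mul, ← Finset.sum_sub_distrib]
        refine Finset.sum_congr rfl fun χ _ => ?_
        have : ((χ (t * s) : Kˣ) : K) = ((χ t : Kˣ) : K) * ((χ s : Kˣ) : K) := by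
          rw [map_mul]; push_cast; ring
        rw [this, hd]
        ring
      set Sup := Finset.univ.filter fun t : T => ∑ χ ∈ S, c χ * ((χ t : Kˣ) : K) ≠ 0
        with hSup
      set Sup' := Finset.univ.filter fun t : T => ∑ χ ∈ S', d χ * ((χ t : Kˣ) : K) ≠ 0
        with hSup'
      have hsupsub : Sup' ⊆ Sup ∪ Sup.image (· * s⁻¹) := by
        intro t ht
        have ht' := (Finset.mem_filter.mp ht).2
        rw [key t] at ht'
        by_cases hft : ∑ χ ∈ S, c χ * ((χ t : Kˣ) : K) ≠ 0
        · exact Finset.mem_union_left _ (Finset.mem_filter.mpr ⟨Finset.mem_univ _, hft⟩)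
        · push_neg at hft
          have hfts : ∑ χ ∈ S, c χ * ((χ (t * s) : Kˣ) : K) ≠ 0 := by
            intro h
            rw [h, hft, zero_mul, sub_zero] at ht'
            exact ht' rfl
          refine Finset.mem_union_right _ (Finset.mem_image.mpr ⟨t * s, ?_, ?_⟩)
          · exact Finset.mem_filter.mpr ⟨Finset.mem_univ _, hfts⟩
          · simp [mul_assoc]
      have hcard2 : Sup'.card ≤ 2 * Sup.card := by
        calc Sup'.card ≤ (Sup ∪ Sup.image (· * s⁻¹)).card := Finset.card_le_card hsupsub
          _ ≤ Sup.card + (Sup.image (· * s⁻¹)).card := Finset.card_union_le _ _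
          _ = Sup.card + Sup.card := by
              rw [Finset.card_image_of_injective _ (fun a b h => by
                simpa using mul_right_cancel (h : a * s⁻¹ = b * s⁻¹))]
          _ = 2 * Sup.card := by ring
      have hss : S' ⊂ S :=
        (Finset.filter_subset _ _).trans_ssubset (Finset.erase_ssubset hχ₁)
      have hIH := ih S' hss ⟨χ₀, hχ₀S'⟩ d hd0
      have hS'card : 1 ≤ S'.card := Finset.card_pos.mpr ⟨χ₀, hχ₀S'⟩
      have hS'le : S'.card ≤ S.card - 1 := by
        have := Finset.card_le_card ((Finset.filter_subset _ _) : S' ⊆ S.erase χ₁)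
        rw [Finset.card_erase_of_mem hχ₁] at this
        exact this
      calc Fintype.card T ≤ 2 ^ (S'.card - 1) * Sup'.card := hIH
        _ ≤ 2 ^ (S'.card - 1) * (2 * Sup.card) := Nat.mul_le_mul_left _ hcard2
        _ = 2 ^ (S'.card - 1 + 1) * Sup.card := by ring
        _ ≤ 2 ^ (S.card - 1) * Sup.card := by
            apply Nat.mul_le_mul_right
            apply Nat.pow_le_pow_right (by norm_num)
            omega

/-- Lusztig's refinement of Dedekind's theorem: a nonzero linear combination of
`k ≥ 1` distinct characters, with all coefficients nonzero, is nonzero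
somewhere, and in fact on at least `2^{1-k} * |T|` elements of `T`. -/
theorem support_of_character_combination_large
    {T K : Type*} [CommGroup T] [Fintype T] [DecidableEq T]
    [Field K] [CharZero K]
    (k : ℕ) (hk : 1 ≤ k)
    (θ : Fin k → (T →* Kˣ)) (hθ : Function.Injective θ)
    (c : Fin k → K) (hc : ∀ i, c i ≠ 0) :
    (∃ t : T, ∑ i, c i * ((θ i t : Kˣ) : K) ≠ 0) ∧
    Fintype.card T ≤
      2 ^ (k - 1) *
        (Finset.univ.filter fun t : T =>
          ∑ i, c i * ((θ i t : Kˣ) : K) ≠ 0).card := by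
  set S := Finset.univ.image θ with hSdef
  set c' : (T →* Kˣ) → K := fun χ => ∑ i ∈ Finset.univ.filter (fun i => θ i = χ), c i
    with hc'def
  have hc'θ : ∀ i, c' (θ i) = c i := by
    intro i
    have : Finset.univ.filter (fun j => θ j = θ i) = {i} := by
      ext j; simp [hθ.eq_iff]
    rw [hc'def]; simp only
    rw [this, Finset.sum_singleton]
  have hsum : ∀ t : T, ∑ χ ∈ S, c' χ * ((χ t : Kˣ) : K) = ∑ i, c i * ((θ i t : Kˣ) : K) := by
    intro t
    rw [hSdef, Finset.sum_image (fun a _ b _ h => hθ h)]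
    exact Finset.sum_congr rfl fun i _ => by rw [hc'θ]
  have hScard : S.card = k := by
    rw [hSdef, Finset.card_image_of_injective _ hθ]; simp
  have hSne : S.Nonempty := by
    rw [hSdef]
    exact ⟨θ ⟨0, hk⟩, Finset.mem_image_of_mem _ (Finset.mem_univ _)⟩
  have hc' : ∀ χ ∈ S, c' χ ≠ 0 := by
    intro χ hχ
    obtain ⟨i, _, rfl⟩ := Finset.mem_image.mp hχ
    rw [hc'θ]; exact hc i
  have main := lusztig_aux S hSne c' hc'
  rw [hScard] at main
  have heqset : (Finset.univ.filter fun t : T => ∑ χ ∈ S, c' χ * ((χ t : Kˣ) : K) ≠ 0)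
      = (Finset.univ.filter fun t : T => ∑ i, c i * ((θ i t : Kˣ) : K) ≠ 0) := by
    ext t; simp [hsum t]
  rw [heqset] at main
  refine ⟨?_, main⟩
  by_contra h
  push_neg at h
  have : (Finset.univ.filter fun t : T => ∑ i, c i * ((θ i t : Kˣ) : K) ≠ 0) = ∅ := by
    ext t; simp [h t]
  rw [this, Finset.card_empty, Nat.mul_zero] at main
  exact absurd (Nat.le_zero.mp main) Fintype.card_ne_zero
end
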